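/- The map 𝓛 on Ω = [1,2) × [−1, ∞), defined by 𝓛(x,y) = (−1/(x−2), −1/(y+2)) for x ∈ [1, 3/2) and 𝓛(x,y) = (1/(x−1), 1/(y+1)) for x ∈ [3/2, 2), preserves the measure with density 1/(x+y)² with respect to two-dimensional Lebesgue measure on Ω. -/

import Mathlib

open MeasureTheory

section LehnerAux

open ContinuousLinearMap

/-- Diagonal continuous linear map on `ℝ × ℝ` with entries `c`, `d`. -/
noncomputable def lehnerLmap (c d : ℝ) : ℝ × ℝ →L[ℝ] ℝ × ℝ :=
  ((ContinuousLinearMap.smulRight (1 : ℝ →L[ℝ] ℝ) c).comp (fst ℝ ℝ ℝ)).prod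
    ((ContinuousLinearMap.smulRight (1 : ℝ →L[ℝ] ℝ) d).comp (snd ℝ ℝ ℝ))

lemma lehnerLmap_det (c d : ℝ) : (lehnerLmap c d).det = c * d := by
  show (lehnerLmap c d : ℝ × ℝ →ₗ[ℝ] ℝ × ℝ).det = c * d
  rw [← LinearMap.det_toMatrix (Module.Basis.finTwoProd ℝ), Matrix.det_fin_two]
  simp [LinearMap.toMatrix_apply, lehnerLmap]

lemma lehner_hasFDerivAt (ε a : ℝ) (p : ℝ × ℝ) (hx : p.1 ≠ a) (hy : p.2 ≠ -a) :
    HasFDerivAt (fun q : ℝ × ℝ => (ε / (q.1 - a), ε / (q.2 + a)))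
      (lehnerLmap (-ε / (p.1 - a) ^ 2) (-ε / (p.2 + a) ^ 2)) p := by
  have h1 : HasDerivAt (fun t : ℝ => ε / (t - a)) (-ε / (p.1 - a) ^ 2) p.1 := by
    have := ((hasDerivAt_id p.1).sub_const a).inv (sub_ne_zero.2 hx)
    have h := this.const_mul ε
    simpa [div_eq_mul_inv, mul_comm, mul_div_assoc, neg_div] using h
  have h2 : HasDerivAt (fun t : ℝ => ε / (t + a)) (-ε / (p.2 + a) ^ 2) p.2 := by
    have := ((hasDerivAt_id p.2).add_const a).inv
      (by simp only [_root_.id]; intro h; exact hy (by linarith))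
    have h := this.const_mul ε
    simpa [div_eq_mul_inv, mul_comm, mul_div_assoc, neg_div] using h
  exact (((h1.hasFDerivAt.comp p (hasFDerivAt_fst))).prodMk
    ((h2.hasFDerivAt.comp p (hasFDerivAt_snd))))

/-- Change of variables for the maps `(x, y) ↦ (ε/(x-a), ε/(y+a))` with `ε = ±1`:
they preserve the density `1/(x+y)²`. -/
lemma lehner_cov_key (ε a : ℝ) (hε : ε ^ 2 = 1) {s : Set (ℝ × ℝ)} (hs : MeasurableSet s)
    (hx : ∀ p ∈ s, p.1 ≠ a) (hy : ∀ p ∈ s, p.2 ≠ -a) :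
    ∫⁻ p in (fun q : ℝ × ℝ => (ε / (q.1 - a), ε / (q.2 + a))) '' s,
        ENNReal.ofReal (1 / (p.1 + p.2) ^ 2) =
      ∫⁻ p in s, ENNReal.ofReal (1 / (p.1 + p.2) ^ 2) := by
  have hε0 : ε ≠ 0 := by intro h; rw [h] at hε; norm_num at hε
  have hinj : Set.InjOn (fun q : ℝ × ℝ => (ε / (q.1 - a), ε / (q.2 + a))) s := by
    intro p hp q hq h
    have hpx := sub_ne_zero.2 (hx p hp); have hqx := sub_ne_zero.2 (hx q hq)
    have hpy : p.2 + a ≠ 0 := by intro h'; exact hy p hp (by linarith)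
    have hqy : q.2 + a ≠ 0 := by intro h'; exact hy q hq (by linarith)
    have h1 : ε / (p.1 - a) = ε / (q.1 - a) := congrArg Prod.fst h
    have h2 : ε / (p.2 + a) = ε / (q.2 + a) := congrArg Prod.snd h
    have e1 : p.1 = q.1 := by
      field_simp at h1; linarith
    have e2 : p.2 = q.2 := by
      field_simp at h2; linarith
    exact Prod.ext e1 e2
  rw [lintegral_image_eq_lintegral_abs_det_fderiv_mul volume hs
    (fun p hp => (lehner_hasFDerivAt ε a p (hx p hp) (hy p hp)).hasFDerivWithinAt) hinj]
  apply setLIntegral_congr_fun hs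
  intro p hp
  beta_reduce
  have hX : p.1 - a ≠ 0 := sub_ne_zero.2 (hx p hp)
  have hY : p.2 + a ≠ 0 := by intro h'; exact hy p hp (by linarith)
  have hdet : (lehnerLmap (-ε / (p.1 - a) ^ 2) (-ε / (p.2 + a) ^ 2)).det
      = 1 / ((p.1 - a) ^ 2 * (p.2 + a) ^ 2) := by
    rw [lehnerLmap_det]; field_simp; nlinarith [hε]
  have hdetpos : (0:ℝ) < 1 / ((p.1 - a) ^ 2 * (p.2 + a) ^ 2) :=
    one_div_pos.2 (by positivity)
  rw [hdet, abs_of_pos hdetpos]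
  have hsum : ε / (p.1 - a) + ε / (p.2 + a) = ε * (p.1 + p.2) / ((p.1 - a) * (p.2 + a)) := by
    field_simp; ring
  by_cases hxy : p.1 + p.2 = 0
  · simp [hsum, hxy]
  · rw [← ENNReal.ofReal_mul hdetpos.le]
    congr 1
    rw [hsum, div_pow, mul_pow, hε, one_mul]
    field_simp

lemma lehner_horiz_null (c : ℝ) : volume {p : ℝ × ℝ | p.2 = c} = 0 := by
  have h : {p : ℝ × ℝ | p.2 = c} = (Set.univ : Set ℝ) ×ˢ ({c} : Set ℝ) := by
    ext ⟨x, y⟩; simp [Set.mem_prod, Prod.ext_iff, eq_comm]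
  rw [h, Measure.volume_eq_prod, Measure.prod_prod]; simp

lemma lehner_vert_null (c : ℝ) : volume {p : ℝ × ℝ | p.1 = c} = 0 := by
  have h : {p : ℝ × ℝ | p.1 = c} = ({c} : Set ℝ) ×ˢ (Set.univ : Set ℝ) := by
    ext ⟨x, y⟩; simp [Set.mem_prod, Prod.ext_iff, eq_comm]
  rw [h, Measure.volume_eq_prod, Measure.prod_prod]; simp

end LehnerAux

/-- The natural extension of the Lehner Gauss map on Ω = [1,2) × [-1,∞). -/
noncomputable def lehnerNatExt (p : ℝ × ℝ) : ℝ × ℝ :=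
  if p.1 < 3 / 2 then (-1 / (p.1 - 2), -1 / (p.2 + 2))
  else (1 / (p.1 - 1), 1 / (p.2 + 1))

lemma measurable_lehnerNatExt : Measurable lehnerNatExt := by
  unfold lehnerNatExt
  exact Measurable.ite (measurableSet_lt measurable_fst measurable_const)
    ((measurable_const.div (measurable_fst.sub measurable_const)).prod
      (measurable_const.div (measurable_snd.add measurable_const)))
    ((measurable_const.div (measurable_fst.sub measurable_const)).prod
      (measurable_const.div (measurable_snd.add measurable_const)))

lemma lehner_img1 (A : Set (ℝ × ℝ)) (hAΩ : A ⊆ Set.Ico (1 : ℝ) 2 ×ˢ Set.Ici (-1 : ℝ)) :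
    (fun q : ℝ × ℝ => ((-1 : ℝ) / (q.1 - 2), (-1 : ℝ) / (q.2 + 2))) ''
      ((lehnerNatExt ⁻¹' A ∩ Set.Ico (1 : ℝ) 2 ×ˢ Set.Ici (-1 : ℝ)) ∩
        {p : ℝ × ℝ | p.1 < 3 / 2})
    = A ∩ {p : ℝ × ℝ | p.2 < 0} := by
  ext q
  constructor
  · rintro ⟨p, ⟨⟨hpA, hpΩ⟩, hplt⟩, rfl⟩
    have hL : lehnerNatExt p = (-1 / (p.1 - 2), -1 / (p.2 + 2)) := if_pos hplt
    have hy : (-1 : ℝ) ≤ p.2 := hpΩ.2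
    refine ⟨by show (-1 / (p.1 - 2), -1 / (p.2 + 2)) ∈ A; exact hL ▸ hpA, ?_⟩
    show (-1 : ℝ) / (p.2 + 2) < 0
    exact div_neg_of_neg_of_pos (by norm_num) (by linarith)
  · rintro ⟨hqA, hq2⟩
    obtain ⟨⟨hq11, hq12⟩, hq21⟩ := hAΩ hqA
    have hq21' : (-1:ℝ) ≤ q.2 := hq21
    have hq2' : q.2 < 0 := hq2
    have h0 : q.1 ≠ 0 := ne_of_gt (by linarith)
    have h0' : q.2 ≠ 0 := ne_of_lt hq2'
    have hx1 : 1 / q.1 ≤ 1 := by rw [div_le_one (by linarith)]; linarith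
    have hx2 : (1 : ℝ) / 2 < 1 / q.1 := by
      rw [div_lt_div_iff₀ (by norm_num) (by linarith)]; linarith
    have hy1 : 1 / q.2 ≤ -1 := by rw [div_le_iff_of_neg hq2']; linarith
    have hTeq : ((-1 : ℝ) / ((2 - 1 / q.1) - 2), (-1 : ℝ) / ((-2 - 1 / q.2) + 2)) = q := by
      have e1 : (2 - 1 / q.1) - 2 = -(1 / q.1) := by ring
      have e2 : (-2 - 1 / q.2) + 2 = -(1 / q.2) := by ring
      rw [e1, e2]
      apply Prod.ext <;> · show _ = _ ; field_simp
    have hmem : lehnerNatExt (2 - 1 / q.1, -2 - 1 / q.2) = q := by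
      unfold lehnerNatExt
      rw [if_pos (show (2 - 1 / q.1 : ℝ) < 3 / 2 by linarith)]
      exact hTeq
    refine ⟨(2 - 1 / q.1, -2 - 1 / q.2), ⟨⟨?_, ?_⟩, ?_⟩, ?_⟩
    · show lehnerNatExt _ ∈ A; rw [hmem]; exact hqA
    · exact ⟨⟨by linarith, by linarith⟩, by show (-1:ℝ) ≤ -2 - 1/q.2; linarith⟩
    · show (2 - 1 / q.1 : ℝ) < 3 / 2; linarith
    · exact hTeq

lemma lehner_img2 (A : Set (ℝ × ℝ)) (hAΩ : A ⊆ Set.Ico (1 : ℝ) 2 ×ˢ Set.Ici (-1 : ℝ)) :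
    (fun q : ℝ × ℝ => ((1 : ℝ) / (q.1 - 1), (1 : ℝ) / (q.2 + 1))) ''
      ((lehnerNatExt ⁻¹' A ∩ Set.Ico (1 : ℝ) 2 ×ˢ Set.Ici (-1 : ℝ)) ∩
        {p : ℝ × ℝ | 3 / 2 ≤ p.1 ∧ -1 < p.2})
    = A ∩ {p : ℝ × ℝ | 1 < p.1 ∧ 0 < p.2} := by
  ext q
  constructor
  · rintro ⟨p, ⟨⟨hpA, hpΩ⟩, hple, hpgt⟩, rfl⟩
    have hL : lehnerNatExt p = (1 / (p.1 - 1), 1 / (p.2 + 1)) :=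
      if_neg (by push_neg; exact hple)
    have hx : p.1 < 2 := hpΩ.1.2
    refine ⟨by show (1 / (p.1 - 1), 1 / (p.2 + 1)) ∈ A; exact hL ▸ hpA, ?_, ?_⟩
    · show (1 : ℝ) < 1 / (p.1 - 1)
      rw [lt_div_iff₀ (by linarith)]; linarith
    · show (0 : ℝ) < 1 / (p.2 + 1)
      exact one_div_pos.2 (by linarith)
  · rintro ⟨hqA, hq1, hq2⟩
    obtain ⟨⟨hq11, hq12⟩, hq21⟩ := hAΩ hqA
    have hq21' : (-1:ℝ) ≤ q.2 := hq21
    have h0 : q.1 ≠ 0 := ne_of_gt (by linarith)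
    have h0' : q.2 ≠ 0 := ne_of_gt hq2
    have hx1 : (1 : ℝ) / 2 < 1 / q.1 := by
      rw [div_lt_div_iff₀ (by norm_num) (by linarith)]; linarith
    have hx2 : 1 / q.1 < 1 := by rw [div_lt_one (by linarith)]; linarith
    have hy1 : (0 : ℝ) < 1 / q.2 := by positivity
    have hTeq : ((1 : ℝ) / ((1 + 1 / q.1) - 1), (1 : ℝ) / ((-1 + 1 / q.2) + 1)) = q := by
      have e1 : (1 + 1 / q.1) - 1 = 1 / q.1 := by ring
      have e2 : (-1 + 1 / q.2) + 1 = 1 / q.2 := by ring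
      rw [e1, e2, one_div_one_div, one_div_one_div]
    have hmem : lehnerNatExt (1 + 1 / q.1, -1 + 1 / q.2) = q := by
      unfold lehnerNatExt
      rw [if_neg (show ¬ ((1 + 1 / q.1 : ℝ) < 3 / 2) by push_neg; linarith)]
      exact hTeq
    refine ⟨(1 + 1 / q.1, -1 + 1 / q.2), ⟨⟨?_, ?_⟩, ?_, ?_⟩, ?_⟩
    · show lehnerNatExt _ ∈ A; rw [hmem]; exact hqA
    · exact ⟨⟨by linarith, by linarith⟩, by show (-1:ℝ) ≤ -1 + 1/q.2; linarith⟩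
    · show (3 / 2 : ℝ) ≤ 1 + 1 / q.1; linarith
    · show (-1 : ℝ) < -1 + 1 / q.2; linarith
    · exact hTeq

/-- The natural extension of the Lehner map preserves the measure with density
1/(x+y)^2 on Ω = [1,2) × [-1,∞). -/
theorem lehnerNatExt_invariant_measure :
    ∀ A : Set (ℝ × ℝ), MeasurableSet A →
      A ⊆ Set.Ico (1 : ℝ) 2 ×ˢ Set.Ici (-1 : ℝ) →
      ∫⁻ p in lehnerNatExt ⁻¹' A ∩ Set.Ico (1 : ℝ) 2 ×ˢ Set.Ici (-1 : ℝ),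
        ENNReal.ofReal (1 / (p.1 + p.2) ^ 2) =
      ∫⁻ p in A, ENNReal.ofReal (1 / (p.1 + p.2) ^ 2) := by
  intro A hA hAΩ
  have hΩm : MeasurableSet (Set.Ico (1 : ℝ) 2 ×ˢ Set.Ici (-1 : ℝ)) :=
    measurableSet_Ico.prod measurableSet_Ici
  have hSm : MeasurableSet (lehnerNatExt ⁻¹' A ∩ Set.Ico (1 : ℝ) 2 ×ˢ Set.Ici (-1 : ℝ)) :=
    (measurable_lehnerNatExt hA).inter hΩm
  have hS₁m : MeasurableSet ((lehnerNatExt ⁻¹' A ∩ Set.Ico (1 : ℝ) 2 ×ˢ Set.Ici (-1 : ℝ)) ∩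
      {p : ℝ × ℝ | p.1 < 3 / 2}) :=
    hSm.inter (measurableSet_lt measurable_fst measurable_const)
  have hS₂m : MeasurableSet ((lehnerNatExt ⁻¹' A ∩ Set.Ico (1 : ℝ) 2 ×ˢ Set.Ici (-1 : ℝ)) ∩
      {p : ℝ × ℝ | 3 / 2 ≤ p.1 ∧ -1 < p.2}) :=
    hSm.inter ((measurableSet_le measurable_const measurable_fst).inter
      (measurableSet_lt measurable_const measurable_snd))
  -- split the preimage into the two branches, up to a null set
  have hae : ((lehnerNatExt ⁻¹' A ∩ Set.Ico (1 : ℝ) 2 ×ˢ Set.Ici (-1 : ℝ) : Set (ℝ × ℝ))) =ᵐ[volume]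
      (((lehnerNatExt ⁻¹' A ∩ Set.Ico (1 : ℝ) 2 ×ˢ Set.Ici (-1 : ℝ)) ∩
          {p : ℝ × ℝ | p.1 < 3 / 2}) ∪
        ((lehnerNatExt ⁻¹' A ∩ Set.Ico (1 : ℝ) 2 ×ˢ Set.Ici (-1 : ℝ)) ∩
          {p : ℝ × ℝ | 3 / 2 ≤ p.1 ∧ -1 < p.2}) : Set (ℝ × ℝ)) := by
    rw [MeasureTheory.ae_eq_set]
    constructor
    · refine measure_mono_null ?_ (lehner_horiz_null (-1))
      rintro p ⟨hpS, hpn⟩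
      simp only [Set.mem_union, not_or] at hpn
      obtain ⟨hn1, hn2⟩ := hpn
      have h1 : ¬ p.1 < 3 / 2 := fun h => hn1 ⟨hpS, h⟩
      have h2 : ¬ (3 / 2 ≤ p.1 ∧ -1 < p.2) := fun h => hn2 ⟨hpS, h⟩
      push_neg at h1 h2
      have hy : (-1 : ℝ) ≤ p.2 := hpS.2.2
      show p.2 = -1
      exact le_antisymm (h2 h1) hy
    · have he : ((((lehnerNatExt ⁻¹' A ∩ Set.Ico (1 : ℝ) 2 ×ˢ Set.Ici (-1 : ℝ)) ∩
          {p : ℝ × ℝ | p.1 < 3 / 2}) ∪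
        ((lehnerNatExt ⁻¹' A ∩ Set.Ico (1 : ℝ) 2 ×ˢ Set.Ici (-1 : ℝ)) ∩
          {p : ℝ × ℝ | 3 / 2 ≤ p.1 ∧ -1 < p.2})) \
          (lehnerNatExt ⁻¹' A ∩ Set.Ico (1 : ℝ) 2 ×ˢ Set.Ici (-1 : ℝ)) : Set (ℝ × ℝ)) = ∅ := by
        rw [Set.diff_eq_empty]
        exact Set.union_subset Set.inter_subset_left Set.inter_subset_left
      rw [he]
      exact measure_empty
  have hdisj : Disjoint ((lehnerNatExt ⁻¹' A ∩ Set.Ico (1 : ℝ) 2 ×ˢ Set.Ici (-1 : ℝ)) ∩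
      {p : ℝ × ℝ | p.1 < 3 / 2})
      ((lehnerNatExt ⁻¹' A ∩ Set.Ico (1 : ℝ) 2 ×ˢ Set.Ici (-1 : ℝ)) ∩
      {p : ℝ × ℝ | 3 / 2 ≤ p.1 ∧ -1 < p.2}) := by
    rw [Set.disjoint_left]
    rintro p ⟨_, hlt⟩ ⟨_, hge, _⟩
    exact absurd hlt (not_lt.2 hge)
  rw [setLIntegral_congr hae, lintegral_union hS₂m hdisj]
  -- change of variables on each branch
  have hcov1 := lehner_cov_key (-1) 2 (by norm_num) hS₁m
    (fun p hp => by have h : p.1 < 3 / 2 := hp.2; exact ne_of_lt (by linarith))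
    (fun p hp => by have h : (-1 : ℝ) ≤ p.2 := hp.1.2.2; exact ne_of_gt (by norm_num; linarith))
  have hcov2 := lehner_cov_key 1 1 (by norm_num) hS₂m
    (fun p hp => by have h : (3 : ℝ) / 2 ≤ p.1 := hp.2.1; exact ne_of_gt (by linarith))
    (fun p hp => by have h : (-1 : ℝ) < p.2 := hp.2.2; exact ne_of_gt (by linarith))
  rw [lehner_img1 A hAΩ] at hcov1
  rw [lehner_img2 A hAΩ] at hcov2
  rw [← hcov1, ← hcov2]
  -- split the target integral
  have hAsplit : A = (A ∩ {p : ℝ × ℝ | p.2 < 0}) ∪ (A ∩ {p : ℝ × ℝ | 0 ≤ p.2}) := by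
    rw [← Set.inter_union_distrib_left]
    ext p; simp [lt_or_ge p.2 0, le_or_gt (0:ℝ) p.2]
  have hdisj2 : Disjoint (A ∩ {p : ℝ × ℝ | p.2 < 0}) (A ∩ {p : ℝ × ℝ | 0 ≤ p.2}) := by
    rw [Set.disjoint_left]
    intro p hp1 hp2
    have a1 : p.2 < 0 := hp1.2
    have a2 : (0:ℝ) ≤ p.2 := hp2.2
    exact absurd a1 (not_lt.2 a2)
  have hA2m : MeasurableSet (A ∩ {p : ℝ × ℝ | 0 ≤ p.2}) :=
    hA.inter (measurableSet_le measurable_const measurable_snd)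
  conv_rhs => rw [hAsplit]
  rw [lintegral_union hA2m hdisj2]
  congr 1
  -- the remaining piece: A ∩ {x > 1, y > 0} agrees a.e. with A ∩ {y ≥ 0}
  apply setLIntegral_congr
  rw [MeasureTheory.ae_eq_set]
  constructor
  · have he2 : (A ∩ {p : ℝ × ℝ | 1 < p.1 ∧ 0 < p.2}) \ (A ∩ {p : ℝ × ℝ | 0 ≤ p.2}) = ∅ := by
      rw [Set.diff_eq_empty]
      rintro p ⟨hpA, _, hp2⟩
      exact ⟨hpA, le_of_lt hp2⟩
    rw [he2]
    exact measure_empty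
  · refine measure_mono_null ?_
      (measure_union_null (lehner_vert_null 1) (lehner_horiz_null 0))
    rintro p ⟨⟨hpA, hpge⟩, hpn⟩
    have hge : (0 : ℝ) ≤ p.2 := hpge
    have h1 : (1 : ℝ) ≤ p.1 := (hAΩ hpA).1.1
    simp only [Set.mem_inter_iff, Set.mem_setOf_eq, not_and] at hpn
    by_cases h2 : p.2 = 0
    · exact Or.inr h2
    · have hp2 : 0 < p.2 := lt_of_le_of_ne hge (Ne.symm h2)
      have h3 := hpn hpA
      push_neg at h3
      left
      show p.1 = 1
      by_contra hc
      have h4 : 1 < p.1 := lt_of_le_of_ne h1 (Ne.symm hc)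
      exact absurd hp2 (not_lt.2 (h3 h4))
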